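/- The K-L-multi-shift rule (for K a proper subset of {1,…,n}: from Γ,(φ,k) → Δ for all k ∈ K, infer Γ → Δ, {φ}×(complement of K)) is derivable in NMVL_A from its premises, the derivable sequent → {φ}×{1,…,n}, and cuts. -/
import Mathlib


/-- Formulas over a set `C` of connectives (applied to lists of arguments). -/
inductive Fm (C : Type) : Type
  | atom : ℕ → Fm C
  | app : C → List (Fm C) → Fm C

noncomputable instance {C : Type} : DecidableEq (Fm C) := Classical.decEq _

/-- A sequent of finite sets of labelled formulas. -/
structure Sequent (C : Type) [DecidableEq C] (n : ℕ) where
  ant : Finset (Fm C × Fin n)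
  suc : Finset (Fm C × Fin n)

variable {C : Type} [DecidableEq C] {n : ℕ}

/-- A valuation legal w.r.t. the non-deterministic tables `tbl`. -/
def IsVal (tbl : C → List (Fin n) → Finset (Fin n)) (v : Fm C → Fin n) : Prop :=
  ∀ c args, v (Fm.app c args) ∈ tbl c (args.map v)

/-- A valuation satisfies a sequent. -/
def Sat (v : Fm C → Fin n) (S : Sequent C n) : Prop :=
  (∀ p ∈ S.ant, v p.1 = p.2) → ∃ p ∈ S.suc, v p.1 = p.2

/-- Semantic entailment. -/
def Entails (tbl : C → List (Fin n) → Finset (Fin n)) (H : Set (Sequent C n)) (S : Sequent C n) : Prop :=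
  ∀ v : Fm C → Fin n, IsVal tbl v → (∀ T ∈ H, Sat v T) → Sat v S

/-- The family (∗(φ₁,…,φ_ℓ)×k)⁻¹ of antecedent sets. -/
def Theta (tbl : C → List (Fin n) → Finset (Fin n)) (c : C) (args : List (Fm C)) (k : Fin n) :
    Set (Finset (Fm C × Fin n)) :=
  { Θ | ∃ ks : List (Fin n), ks.length = args.length ∧ k ∈ tbl c ks ∧ Θ = (args.zip ks).toFinset }

/-- Λ ∈ ⋁(∗(φ₁,…,φ_ℓ)×k)⁻¹ : a choice set hitting each Θ_q and contained in their union. -/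
def Choice (tbl : C → List (Fin n) → Finset (Fin n)) (c : C) (args : List (Fm C)) (k : Fin n)
    (Λ : Finset (Fm C × Fin n)) : Prop :=
  (∀ Θ ∈ Theta tbl c args k, ∃ x ∈ Θ, x ∈ Λ) ∧
  (∀ x ∈ Λ, ∃ Θ ∈ Theta tbl c args k, x ∈ Θ)

/-- Which optional axioms/rules a calculus has. -/
structure Rules where
  tableAx : Bool      -- table axioms (2)
  tableRuleS : Bool   -- succedent table rules (10)
  dualAx : Bool       -- distributively dual axioms (13)
  anteRule : Bool     -- antecedent introduction rules (17)
  multiShift : Bool   -- K-L-multi-shift (16)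
  cut : Bool
  res : Bool

/-- Derivability from hypothesis sequents `H`; axioms (ψ,k)→(ψ,k), L-shift, R-shift and
weakenings are always present, the other axioms/rules are governed by `R`. -/
inductive Deriv (R : Rules) (tbl : C → List (Fin n) → Finset (Fin n)) (H : Set (Sequent C n)) :
    Sequent C n → Prop
  | hyp {S} : S ∈ H → Deriv R tbl H S
  | ax (ψ : Fm C) (k : Fin n) : Deriv R tbl H ⟨{(ψ, k)}, {(ψ, k)}⟩
  | tableAx (c : C) (args : List (Fm C)) (ks : List (Fin n))
      (hlen : ks.length = args.length) (h : R.tableAx = true) :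
      Deriv R tbl H ⟨(args.zip ks).toFinset, (tbl c ks).image (fun k => (Fm.app c args, k))⟩
  | lshift {Γ Δ} (φ : Fm C) (k : Fin n) :
      Deriv R tbl H ⟨insert (φ, k) Γ, Δ⟩ →
      Deriv R tbl H ⟨Γ, Δ ∪ ({k}ᶜ : Finset (Fin n)).image (fun k' => (φ, k'))⟩
  | rshift {Γ Δ} (φ : Fm C) {k' k'' : Fin n} (h : k' ≠ k'') :
      Deriv R tbl H ⟨Γ, insert (φ, k') Δ⟩ → Deriv R tbl H ⟨insert (φ, k'') Γ, Δ⟩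
  | lweak {Γ Δ} (φ : Fm C) (k : Fin n) :
      Deriv R tbl H ⟨Γ, Δ⟩ → Deriv R tbl H ⟨insert (φ, k) Γ, Δ⟩
  | rweak {Γ Δ} (φ : Fm C) (k : Fin n) :
      Deriv R tbl H ⟨Γ, Δ⟩ → Deriv R tbl H ⟨Γ, insert (φ, k) Δ⟩
  | cut {Γ Δ} (φ : Fm C) (k : Fin n) (h : R.cut = true) :
      Deriv R tbl H ⟨Γ, insert (φ, k) Δ⟩ → Deriv R tbl H ⟨insert (φ, k) Γ, Δ⟩ →
      Deriv R tbl H ⟨Γ, Δ⟩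
  | res {Γ Δ' Δ''} (φ : Fm C) {k' k'' : Fin n} (h : R.res = true) (hk : k' ≠ k'') :
      Deriv R tbl H ⟨Γ, insert (φ, k') Δ'⟩ → Deriv R tbl H ⟨Γ, insert (φ, k'') Δ''⟩ →
      Deriv R tbl H ⟨Γ, Δ' ∪ Δ''⟩
  | tableRuleS {Γ Δ} (c : C) (args : List (Fm C)) (ks : List (Fin n))
      (hlen : ks.length = args.length) (h : R.tableRuleS = true)
      (prem : ∀ p ∈ args.zip ks, Deriv R tbl H ⟨Γ, insert p Δ⟩) :
      Deriv R tbl H ⟨Γ, Δ ∪ (tbl c ks).image (fun k => (Fm.app c args, k))⟩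
  | dualAx (c : C) (args : List (Fm C)) (k : Fin n) (Λ : Finset (Fm C × Fin n))
      (h : R.dualAx = true) (hΛ : Choice tbl c args k Λ) :
      Deriv R tbl H ⟨{(Fm.app c args, k)}, Λ⟩
  | anteRule {Γ Δ} (c : C) (args : List (Fm C)) (k : Fin n) (h : R.anteRule = true)
      (prem : ∀ ks : List (Fin n), ks.length = args.length → k ∈ tbl c ks →
        Deriv R tbl H ⟨Γ ∪ (args.zip ks).toFinset, Δ⟩) :
      Deriv R tbl H ⟨insert (Fm.app c args, k) Γ, Δ⟩
  | multiShift {Γ Δ} (φ : Fm C) (K : Finset (Fin n)) (h : R.multiShift = true)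
      (hK : K ≠ Finset.univ)
      (prem : ∀ k ∈ K, Deriv R tbl H ⟨insert (φ, k) Γ, Δ⟩) :
      Deriv R tbl H ⟨Γ, Δ ∪ Kᶜ.image (fun k' => (φ, k'))⟩

/-- NMVL_A : table axioms, cut and resolution. -/
def NMVL_A : Rules := ⟨true, false, false, false, false, true, true⟩
/-- NMVL_A with cut but without resolution. -/
def NMVL_A_cut : Rules := ⟨true, false, false, false, false, true, false⟩
/-- NMVL_A with resolution but without cut. -/
def NMVL_A_res : Rules := ⟨true, false, false, false, false, false, true⟩
/-- NMVL_R : succedent table rules, cut and resolution. -/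
def NMVL_R : Rules := ⟨false, true, false, false, false, true, true⟩
/-- NMVL_R without cut and resolution. -/
def NMVL_R_cf : Rules := ⟨false, true, false, false, false, false, false⟩
/-- NMVL_A^dd : distributively dual axioms, cut and resolution. -/
def NMVL_Add : Rules := ⟨false, false, true, false, false, true, true⟩
/-- NMVL_R^sd : antecedent table rules, multi-shift, cut and resolution. -/
def NMVL_Rsd : Rules := ⟨false, false, false, true, true, true, true⟩

lemma weakR {R : Rules} {tbl : C → List (Fin n) → Finset (Fin n)} {H : Set (Sequent C n)}
    {Γ Δ : Finset (Fm C × Fin n)} (h : Deriv R tbl H ⟨Γ, Δ⟩) (X : Finset (Fm C × Fin n)) :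
    Deriv R tbl H ⟨Γ, Δ ∪ X⟩ := by
  classical
  induction X using Finset.induction_on with
  | empty => simpa using h
  | @insert a s ha ih =>
    have : Δ ∪ insert a s = insert (a.1, a.2) (Δ ∪ s) := by
      rw [Finset.union_insert]
    rw [this]
    exact Deriv.rweak a.1 a.2 ih

lemma weakL {R : Rules} {tbl : C → List (Fin n) → Finset (Fin n)} {H : Set (Sequent C n)}
    {Γ Δ : Finset (Fm C × Fin n)} (h : Deriv R tbl H ⟨Γ, Δ⟩) (X : Finset (Fm C × Fin n)) :
    Deriv R tbl H ⟨Γ ∪ X, Δ⟩ := by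
  classical
  induction X using Finset.induction_on with
  | empty => simpa using h
  | @insert a s ha ih =>
    have : Γ ∪ insert a s = insert (a.1, a.2) (Γ ∪ s) := by
      rw [Finset.union_insert]
    rw [this]
    exact Deriv.lweak a.1 a.2 ih

lemma weaken {R : Rules} {tbl : C → List (Fin n) → Finset (Fin n)} {H : Set (Sequent C n)}
    {Γ' Δ' Γ Δ : Finset (Fm C × Fin n)} (h : Deriv R tbl H ⟨Γ', Δ'⟩)
    (hΓ : Γ' ⊆ Γ) (hΔ : Δ' ⊆ Δ) : Deriv R tbl H ⟨Γ, Δ⟩ := by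
  have h1 := weakL (weakR h (Δ \ Δ')) (Γ \ Γ')
  rwa [Finset.union_sdiff_of_subset hΓ, Finset.union_sdiff_of_subset hΔ] at h1

lemma allLabels {R : Rules} {tbl : C → List (Fin n) → Finset (Fin n)} {H : Set (Sequent C n)}
    (hn : 2 ≤ n) (φ : Fm C) :
    Deriv R tbl H ⟨∅, Finset.univ.image (fun k => (φ, k))⟩ := by
  classical
  have hpos : 0 < n := by omega
  set k : Fin n := ⟨0, hpos⟩
  have hax : Deriv R tbl H ⟨insert (φ, k) ∅, {(φ, k)}⟩ := by
    simpa using Deriv.ax (R := R) (tbl := tbl) (H := H) φ k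
  have h := Deriv.lshift φ k hax
  have heq : ({(φ, k)} : Finset (Fm C × Fin n)) ∪ ({k}ᶜ : Finset (Fin n)).image
      (fun k' => (φ, k')) = Finset.univ.image (fun k => (φ, k)) := by
    ext x
    simp only [Finset.mem_union, Finset.mem_singleton, Finset.mem_image, Finset.mem_compl,
      Finset.mem_singleton, Finset.mem_univ, true_and]
    constructor
    · rintro (rfl | ⟨k', _, rfl⟩) <;> exact ⟨_, rfl⟩
    · rintro ⟨k', rfl⟩
      by_cases hk : k' = k
      · exact Or.inl (by rw [hk])
      · exact Or.inr ⟨k', hk, rfl⟩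
  rwa [heq] at h

/-- the K-L-multi-shift rule is derivable in NMVL_A. -/
theorem stmt16 (hn : 2 ≤ n) (tbl : C → List (Fin n) → Finset (Fin n))
    (htbl : ∀ c ks, (tbl c ks).Nonempty) (H : Set (Sequent C n))
    (Γ Δ : Finset (Fm C × Fin n)) (φ : Fm C) (K : Finset (Fin n)) (hK : K ≠ Finset.univ)
    (prem : ∀ k ∈ K, Deriv NMVL_A tbl H ⟨insert (φ, k) Γ, Δ⟩) :
    Deriv NMVL_A tbl H ⟨Γ, Δ ∪ Kᶜ.image (fun k' => (φ, k'))⟩ := by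
  classical
  suffices h : ∀ K' : Finset (Fin n), K' ⊆ K →
      Deriv NMVL_A tbl H ⟨Γ, Δ ∪ K'ᶜ.image (fun k' => (φ, k'))⟩ from
    h K (Finset.Subset.refl K)
  intro K'
  induction K' using Finset.induction_on with
  | empty =>
    intro _
    have := allLabels (R := NMVL_A) (tbl := tbl) (H := H) hn φ
    refine weaken this (Finset.empty_subset _) ?_
    simp [Finset.union_comm]
  | @insert a s ha ih =>
    intro hsub
    have haK : a ∈ K := hsub (Finset.mem_insert_self a s)
    have hsK : s ⊆ K := fun x hx => hsub (Finset.mem_insert_of_mem hx)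
    have h1 : Deriv NMVL_A tbl H ⟨Γ, insert (φ, a) (Δ ∪ ((insert a s)ᶜ).image (fun k' => (φ, k')))⟩ := by
      have heq : insert (φ, a) (Δ ∪ ((insert a s)ᶜ).image (fun k' => (φ, k'))) =
          Δ ∪ sᶜ.image (fun k' => (φ, k')) := by
        ext x
        simp only [Finset.mem_insert, Finset.mem_union, Finset.mem_image, Finset.mem_compl,
          Finset.mem_insert]
        constructor
        · rintro (rfl | hx | ⟨k', hk', rfl⟩)
          · exact Or.inr ⟨a, ha, rfl⟩
          · exact Or.inl hx
          · exact Or.inr ⟨k', fun h => hk' (Or.inr h), rfl⟩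
        · rintro (hx | ⟨k', hk', rfl⟩)
          · exact Or.inr (Or.inl hx)
          · by_cases hk : k' = a
            · exact Or.inl (by rw [hk])
            · exact Or.inr (Or.inr ⟨k', fun h => absurd h (by tauto), rfl⟩)
      rw [heq]
      exact ih hsK
    have h2 : Deriv NMVL_A tbl H ⟨insert (φ, a) Γ, Δ ∪ ((insert a s)ᶜ).image (fun k' => (φ, k'))⟩ :=
      weaken (prem a haK) (Finset.Subset.refl _) Finset.subset_union_left
    exact Deriv.cut φ a rfl h1 h2
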